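/- Let n ≥ 1 and let v be an n-dimensional unit vector all of whose entries lie in ℤ[1/√2] = {x₀ + x₁√2 : x₀, x₁ ∈ ℤ[1/2]}, with lde_√2(v) > 0. Then there exist finitely many generators G₁, …, G_ℓ, each taken from the set {(-1)_[a], X_[a,b], H_[a,b] : a, b distinct elements of {1,…,n}}, such that v' = G₁ ⋯ G_ℓ v satisfies lde_√2(v') < lde_√2(v). -/

import Mathlib

open Matrix Complex

noncomputable section

/-- The `m`-level operator of type `W` with indices `f 0, …, f (m-1)`:
for injective `f`, its `(f j', f k')` entry is `W j' k'` and it agrees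
with the identity matrix elsewhere. -/
def levelOp {n m : ℕ} (f : Fin m → Fin n) (W : Matrix (Fin m) (Fin m) ℂ) :
    Matrix (Fin n) (Fin n) ℂ := fun j k =>
  (∑ j' : Fin m, ∑ k' : Fin m, if f j' = j ∧ f k' = k then W j' k' else 0) +
  (if j = k ∧ ∀ j' : Fin m, f j' ≠ j then 1 else 0)

/-- The NOT gate `X`. -/
def Xmat : Matrix (Fin 2) (Fin 2) ℂ := !![0, 1; 1, 0]

/-- The Hadamard gate `H`. -/
def Hmat : Matrix (Fin 2) (Fin 2) ℂ := (Real.sqrt 2 : ℂ)⁻¹ • !![1, 1; 1, -1]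

/-- `G` is one of the generators `(-1)_[a]`, `X_[a,b]`, `H_[a,b]` with `a ≠ b`. -/
def IsRealGen {n : ℕ} (G : Matrix (Fin n) (Fin n) ℂ) : Prop :=
  (∃ a : Fin n, G = levelOp ![a] !![-1]) ∨
  (∃ a b : Fin n, a ≠ b ∧ G = levelOp ![a, b] Xmat) ∨
  (∃ a b : Fin n, a ≠ b ∧ G = levelOp ![a, b] Hmat)

/-- `x` is a dyadic fraction: an element of `ℤ[1/2]` (viewed inside `ℂ`). -/
def IsDyadic (x : ℂ) : Prop := ∃ (u : ℤ) (q : ℕ), x = (u : ℂ) / 2 ^ q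

/-- `x` belongs to the ring `ℤ[1/√2] = {x₀ + x₁√2 : x₀, x₁ ∈ ℤ[1/2]}`. -/
def InDSqrt2 (x : ℂ) : Prop :=
  ∃ x₀ x₁ : ℂ, IsDyadic x₀ ∧ IsDyadic x₁ ∧ x = x₀ + x₁ * Real.sqrt 2

/-- The least √2-denominator exponent of a vector `v` with entries in
`ℤ[1/√2]`: the least `q : ℕ` such that `√2^q · v` has entries in `ℤ[√2]`. -/
def ldeSqrt2 {n : ℕ} (v : Fin n → ℂ) : ℕ :=
  sInf {q : ℕ | ∀ j, ∃ a b : ℤ, (Real.sqrt 2 : ℂ) ^ q * v j = (a : ℂ) + (b : ℂ) * Real.sqrt 2}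

/- ### Auxiliary lemmas -/

/-- `√2^q · x ∈ ℤ[√2]`. -/
def Good (q : ℕ) (x : ℂ) : Prop :=
  ∃ a b : ℤ, (Real.sqrt 2 : ℂ) ^ q * x = (a:ℂ) + (b:ℂ) * Real.sqrt 2

lemma s_ne : (Real.sqrt 2 : ℂ) ≠ 0 := by
  simp [Complex.ofReal_ne_zero, Real.sqrt_ne_zero']

lemma s_mul_s : (Real.sqrt 2 : ℂ) * Real.sqrt 2 = 2 := by
  norm_cast
  exact Real.mul_self_sqrt (by norm_num)

lemma good_succ {q : ℕ} {x : ℂ} (h : Good q x) : Good (q+1) x := by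
  obtain ⟨a, b, hab⟩ := h
  refine ⟨2*b, a, ?_⟩
  have h1 : (Real.sqrt 2 : ℂ)^(q+1) * x = Real.sqrt 2 * ((a:ℂ) + b * Real.sqrt 2) := by
    rw [← hab]; ring
  rw [h1]; push_cast
  linear_combination (b:ℂ) * s_mul_s

lemma good_mono {q q' : ℕ} (h : q ≤ q') {x : ℂ} (hx : Good q x) : Good q' x := by
  induction q' with
  | zero => exact (by omega : q = 0) ▸ hx
  | succ m ih =>
    rcases Nat.lt_or_ge q (m+1) with h' | h'
    · exact good_succ (ih (by omega))
    · exact (by omega : q = m+1) ▸ hx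

lemma int_coeff_eq {A B C : ℤ} (h : (A:ℂ) + (B:ℂ) * Real.sqrt 2 = (C:ℂ)) : A = C ∧ B = 0 := by
  have hR : (A:ℝ) + (B:ℝ) * Real.sqrt 2 = (C:ℝ) := by
    have := congrArg Complex.re h
    simpa using this
  have hB : B = 0 := by
    by_contra hB
    have hs : Real.sqrt 2 = ((C - A : ℤ):ℝ) / ((B:ℤ):ℝ) := by
      field_simp
      push_cast
      linarith
    have hirr : Irrational (Real.sqrt 2) := irrational_sqrt_two
    rw [hs] at hirr
    exact hirr ⟨((C-A : ℤ) : ℚ)/((B:ℤ):ℚ), by push_cast; ring⟩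
  subst hB
  simp at hR
  exact ⟨by exact_mod_cast hR, rfl⟩

lemma mulVec_levelOp_two {n : ℕ} (a b : Fin n) (hab : a ≠ b)
    (W : Matrix (Fin 2) (Fin 2) ℂ) (u : Fin n → ℂ) (m : Fin n) :
    (levelOp ![a,b] W).mulVec u m =
      if m = a then W 0 0 * u a + W 0 1 * u b
      else if m = b then W 1 0 * u a + W 1 1 * u b
      else u m := by
  simp only [Matrix.mulVec, dotProduct, levelOp, Fin.sum_univ_two,
    Matrix.cons_val_zero, Matrix.cons_val_one, Matrix.head_cons, Fin.forall_fin_two]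
  rcases eq_or_ne m a with rfl | hma
  · simp [hab, hab.symm, Finset.sum_ite_eq, add_mul, ite_mul, Finset.sum_add_distrib]
  · rcases eq_or_ne m b with rfl | hmb
    · simp [hab, hab.symm, hma, Ne.symm hma, Finset.sum_ite_eq, add_mul, ite_mul,
        Finset.sum_add_distrib]
    · simp [hma, Ne.symm hma, hmb, Ne.symm hmb, Finset.sum_ite_eq, add_mul, ite_mul,
        Finset.sum_add_distrib]

lemma mulVec_H {n : ℕ} (i j : Fin n) (hij : i ≠ j) (u : Fin n → ℂ) :
    ∀ m, (levelOp ![i,j] Hmat).mulVec u m =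
      if m = i then (u i + u j) * (Real.sqrt 2 : ℂ)⁻¹
      else if m = j then (u i - u j) * (Real.sqrt 2 : ℂ)⁻¹
      else u m := by
  intro m
  rw [mulVec_levelOp_two i j hij]
  rcases eq_or_ne m i with rfl | hmi
  · simp [Hmat]; ring
  · rcases eq_or_ne m j with rfl | hmj
    · simp [Hmat, hij.symm]; ring
    · simp [hmi, hmj]

lemma half_good {q : ℕ} {z : ℂ} {A B : ℤ}
    (hz : (Real.sqrt 2:ℂ)^(q+1) * z = (A:ℂ) + (B:ℂ) * Real.sqrt 2)
    (hA : Even A) (hB : Even B) : Good q (z * (Real.sqrt 2:ℂ)⁻¹) := by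
  obtain ⟨e, he⟩ := hA
  obtain ⟨f, hf⟩ := hB
  have he' : (A:ℂ) = e + e := by exact_mod_cast congrArg (Int.cast : ℤ → ℂ) he
  have hf' : (B:ℂ) = f + f := by exact_mod_cast congrArg (Int.cast : ℤ → ℂ) hf
  refine ⟨e, f, ?_⟩
  apply mul_left_cancel₀ (two_ne_zero (α := ℂ))
  have key : (2:ℂ) * ((Real.sqrt 2:ℂ)^q * (z * (Real.sqrt 2:ℂ)⁻¹)) =
      (Real.sqrt 2:ℂ)^(q+1) * z := by
    rw [← s_mul_s, pow_succ]
    field_simp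
  rw [key, hz, he', hf']
  ring

/-- Two entries that can be simultaneously reduced by a Hadamard. -/
def Compat (q : ℕ) (x y : ℂ) : Prop :=
  ∃ a b c d : ℤ, (Real.sqrt 2 : ℂ)^(q+1) * x = (a:ℂ) + (b:ℂ) * Real.sqrt 2 ∧
    (Real.sqrt 2 : ℂ)^(q+1) * y = (c:ℂ) + (d:ℂ) * Real.sqrt 2 ∧
    Even (a + c) ∧ Even (b + d)

lemma compat_good {q : ℕ} {x y : ℂ} (h : Compat q x y) :
    Good q ((x + y) * (Real.sqrt 2 : ℂ)⁻¹) ∧ Good q ((x - y) * (Real.sqrt 2 : ℂ)⁻¹) := by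
  obtain ⟨a, b, c, d, hx, hy, hac, hbd⟩ := h
  constructor
  · refine half_good (A := a + c) (B := b + d) ?_ hac hbd
    push_cast
    linear_combination hx + hy
  · refine half_good (A := a - c) (B := b - d) ?_ ?_ ?_
    · push_cast
      linear_combination hx - hy
    · obtain ⟨e, he⟩ := hac; exact ⟨e - c, by omega⟩
    · obtain ⟨f, hf⟩ := hbd; exact ⟨f - d, by omega⟩

/-- The list of all components of a list of pairs. -/
def comps {α : Type*} (P : List (α × α)) : List α := P.flatMap fun p => [p.1, p.2]

@[simp] lemma comps_nil {α : Type*} : comps ([] : List (α × α)) = [] := rfl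
@[simp] lemma comps_cons {α : Type*} (p : α × α) (P : List (α × α)) :
    comps (p :: P) = p.1 :: p.2 :: comps P := rfl

/-- Any finset of even cardinality can be split into a list of disjoint pairs. -/
lemma pairing {α : Type*} [DecidableEq α] : ∀ (S : Finset α), Even S.card →
    ∃ P : List (α × α), (comps P).Nodup ∧ (comps P).toFinset = S := by
  intro S
  induction S using Finset.strongInduction with
  | _ S ih =>
    intro hev
    rcases Finset.eq_empty_or_nonempty S with rfl | ⟨i, hi⟩
    · exact ⟨[], by simp, by simp⟩
    · have hcard : 2 ≤ S.card := by
        rcases hev with ⟨r, hr⟩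
        have : 0 < S.card := Finset.card_pos.mpr ⟨i, hi⟩
        omega
      have hne : ((S.erase i)).Nonempty := by
        apply Finset.card_pos.mp
        rw [Finset.card_erase_of_mem hi]; omega
      obtain ⟨j, hj⟩ := hne
      have hij : i ≠ j := fun h => (Finset.ne_of_mem_erase hj) h.symm
      have hjS : j ∈ S := Finset.mem_of_mem_erase hj
      set T := (S.erase i).erase j with hT
      have hTsub : T ⊂ S := by
        apply Finset.ssubset_of_subset_of_ssubset (Finset.erase_subset _ _)
        exact Finset.erase_ssubset hi
      have hTcard : Even T.card := by
        rw [hT, Finset.card_erase_of_mem hj, Finset.card_erase_of_mem hi]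
        rcases hev with ⟨r, hr⟩
        exact ⟨r-1, by omega⟩
      obtain ⟨P, hnd, htf⟩ := ih T hTsub hTcard
      have hiT : i ∉ T := by simp [hT]
      have hjT : j ∉ T := by simp [hT]
      have hmem : ∀ x, x ∈ comps P → x ∈ T := by
        intro x hx; rw [← htf]; exact List.mem_toFinset.mpr hx
      refine ⟨(i, j) :: P, ?_, ?_⟩
      · simp only [comps_cons, List.nodup_cons, List.mem_cons]
        refine ⟨?_, ?_, hnd⟩
        · rintro (h | h)
          · exact hij h
          · exact hiT (hmem i h)
        · intro h; exact hjT (hmem j h)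
      · ext x
        simp only [comps_cons, List.toFinset_cons, Finset.mem_insert, List.mem_toFinset]
        constructor
        · rintro (rfl | rfl | hx)
          · exact hi
          · exact hjS
          · exact Finset.mem_of_mem_erase (Finset.mem_of_mem_erase (hmem x hx))
        · intro hx
          by_cases hxi : x = i
          · left; exact hxi
          by_cases hxj : x = j
          · right; left; exact hxj
          · right; right
            have : x ∈ T := by simp [hT, hxi, hxj, hx]
            rw [← htf] at this
            exact List.mem_toFinset.mp this

/-- The main reduction step: given a list of disjoint compatible pairs covering
all "bad" entries, Hadamards on those pairs reduce the exponent everywhere. -/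
lemma reduce_list {n : ℕ} (q : ℕ) : ∀ (P : List (Fin n × Fin n)) (u : Fin n → ℂ),
    (comps P).Nodup →
    (∀ p ∈ P, Compat q (u p.1) (u p.2)) →
    (∀ m, m ∉ comps P → Good q (u m)) →
    ∃ L : List (Matrix (Fin n) (Fin n) ℂ), (∀ G ∈ L, IsRealGen G) ∧
      ∀ m, Good q ((L.prod.mulVec u) m) := by
  intro P
  induction P with
  | nil =>
    intro u _ _ hout
    refine ⟨[], by simp, ?_⟩
    intro m
    simpa [Matrix.one_mulVec] using hout m (by simp)
  | cons p P ih =>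
    intro u hnd hpair hout
    obtain ⟨i, j⟩ := p
    simp only [comps_cons, List.nodup_cons, List.mem_cons] at hnd
    obtain ⟨hi, hj, hndP⟩ := hnd
    have hij : i ≠ j := fun h => hi (Or.inl h)
    have hiP : i ∉ comps P := fun h => hi (Or.inr h)
    have hjP : j ∉ comps P := hj
    set G := levelOp ![i,j] Hmat with hG
    set u' := G.mulVec u with hu'
    have hval : ∀ m, u' m =
        if m = i then (u i + u j) * (Real.sqrt 2 : ℂ)⁻¹
        else if m = j then (u i - u j) * (Real.sqrt 2 : ℂ)⁻¹
        else u m := mulVec_H i j hij u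
    have hcg := compat_good (hpair (i, j) (by simp))
    obtain ⟨L', hgen', hgood'⟩ := ih u' hndP
      (by
        intro p' hp'
        have h1 : p'.1 ∈ comps P := by
          simp only [comps, List.mem_flatMap]
          exact ⟨p', hp', by simp⟩
        have h2 : p'.2 ∈ comps P := by
          simp only [comps, List.mem_flatMap]
          exact ⟨p', hp', by simp⟩
        have e1 : u' p'.1 = u p'.1 := by
          rw [hval]
          rw [if_neg (fun h => hiP (by rw [← h]; exact h1)),
            if_neg (fun h => hjP (by rw [← h]; exact h1))]
        have e2 : u' p'.2 = u p'.2 := by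
          rw [hval]
          rw [if_neg (fun h => hiP (by rw [← h]; exact h2)),
            if_neg (fun h => hjP (by rw [← h]; exact h2))]
        rw [e1, e2]
        exact hpair p' (by simp [hp']))
      (by
        intro m hm
        rcases eq_or_ne m i with rfl | hmi
        · rw [hval]; simp only [if_pos rfl]; exact hcg.1
        rcases eq_or_ne m j with rfl | hmj
        · rw [hval]; rw [if_neg hmi, if_pos rfl]; exact hcg.2
        · rw [hval, if_neg hmi, if_neg hmj]
          exact hout m (by simp [hmi, hmj, hm]))
    refine ⟨L' ++ [G], ?_, ?_⟩
    · intro G' hG'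
      rcases List.mem_append.mp hG' with h | h
      · exact hgen' G' h
      · simp only [List.mem_singleton] at h
        subst h
        exact Or.inr (Or.inr ⟨i, j, hij, hG⟩)
    · intro m
      have : (L' ++ [G]).prod.mulVec u = L'.prod.mulVec u' := by
        rw [List.prod_append, List.prod_singleton, hu', ← Matrix.mulVec_mulVec]
      rw [this]
      exact hgood' m

lemma parity_count {ι : Type*} [DecidableEq ι] (g : ι → ℤ) (s : Finset ι) :
    Even (∑ j ∈ s, g j) ↔ Even (s.filter fun j => Odd (g j)).card := by
  induction s using Finset.induction with
  | empty => simp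
  | @insert a s ha ih =>
    rw [Finset.sum_insert ha, Finset.filter_insert]
    by_cases hg : Odd (g a)
    · rw [if_pos hg, Finset.card_insert_of_notMem (by simp [ha]), Int.even_add,
        Nat.even_add_one]
      simp only [← Int.not_odd_iff_even] at *
      tauto
    · rw [if_neg hg, Int.even_add]
      have : Even (g a) := Int.not_odd_iff_even.mp hg
      tauto

lemma dyadic_pow {x : ℂ} (hx : ∃ (u : ℤ) (q : ℕ), x = (u : ℂ) / 2 ^ q) :
    ∃ q0 : ℕ, ∀ Q, q0 ≤ Q → ∃ c : ℤ, (2:ℂ)^Q * x = (c:ℂ) := by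
  obtain ⟨u, q0, rfl⟩ := hx
  refine ⟨q0, fun Q hQ => ⟨u * 2^(Q - q0), ?_⟩⟩
  have h1 : (2:ℂ)^Q = 2^(Q - q0) * 2^q0 := by
    rw [← pow_add]; congr 1; omega
  rw [h1]
  push_cast
  field_simp

noncomputable section

theorem stmt13 (n : ℕ) (hn : 1 ≤ n) (v : Fin n → ℂ)
    (hunit : ∑ j, (starRingEnd ℂ) (v j) * v j = 1)
    (hR : ∀ j, InDSqrt2 (v j))
    (hlde : 0 < ldeSqrt2 v) :
    ∃ L : List (Matrix (Fin n) (Fin n) ℂ),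
      (∀ G ∈ L, IsRealGen G) ∧ ldeSqrt2 (L.prod.mulVec v) < ldeSqrt2 v := by
  classical
  -- the defining set of the lde is nonempty
  have hgoodex : ∀ j, ∃ q, Good q (v j) := by
    intro j
    obtain ⟨x₀, x₁, h₀, h₁, hv⟩ := hR j
    obtain ⟨q0, h0'⟩ := dyadic_pow h₀
    obtain ⟨q1, h1'⟩ := dyadic_pow h₁
    obtain ⟨a, ha⟩ := h0' (max q0 q1) (le_max_left _ _)
    obtain ⟨b, hb⟩ := h1' (max q0 q1) (le_max_right _ _)
    refine ⟨2 * max q0 q1, a, b, ?_⟩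
    have hpow : (Real.sqrt 2:ℂ)^(2 * max q0 q1) = (2:ℂ)^(max q0 q1) := by
      have h2 : (Real.sqrt 2:ℂ)^2 = 2 := by rw [sq, s_mul_s]
      rw [pow_mul, h2]
    rw [hv, hpow]
    linear_combination ha + (Real.sqrt 2 : ℂ) * hb
  set E : ℕ := Finset.univ.sup (fun j => (hgoodex j).choose) with hE
  have hEgood : ∀ j, Good E (v j) := fun j =>
    good_mono (Finset.le_sup (Finset.mem_univ j)) (hgoodex j).choose_spec
  set S : Set ℕ := {q : ℕ | ∀ j, ∃ a b : ℤ,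
    (Real.sqrt 2 : ℂ) ^ q * v j = (a : ℂ) + (b : ℂ) * Real.sqrt 2} with hS
  have hSne : S.Nonempty := ⟨E, fun j => hEgood j⟩
  have hkS : ldeSqrt2 v ∈ S := Nat.sInf_mem hSne
  set k := ldeSqrt2 v with hkdef
  obtain ⟨q, hq⟩ : ∃ q, k = q + 1 := ⟨k - 1, by omega⟩
  -- fix integer representations
  choose a b hab using hkS
  -- the entries are real
  have hconj : ∀ j, (starRingEnd ℂ) (v j) = v j := by
    intro j
    have hv : v j = ((a j:ℂ) + (b j:ℂ) * Real.sqrt 2) / (Real.sqrt 2:ℂ)^k := by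
      rw [← hab j]
      field_simp [s_ne]
    rw [hv]
    simp [map_div₀, _root_.map_mul, map_add, map_pow, Complex.conj_ofReal]
  -- the quadratic identity
  have hu2 : ∑ j, (v j)^2 = 1 := by
    rw [← hunit]
    exact Finset.sum_congr rfl fun j _ => by rw [hconj j, sq]
  have hkey : ∑ j, ((a j:ℂ) + (b j:ℂ) * Real.sqrt 2)^2 = (2:ℂ)^k := by
    have : ∀ j ∈ Finset.univ, ((a j:ℂ) + (b j:ℂ) * Real.sqrt 2)^2
        = ((Real.sqrt 2:ℂ)^k)^2 * (v j)^2 := fun j _ => by rw [← hab j]; ring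
    rw [Finset.sum_congr rfl this, ← Finset.mul_sum, hu2, mul_one, ← pow_mul,
      mul_comm, pow_mul, ← s_mul_s, sq]
  have hC : ((∑ j, ((a j)^2 + 2*(b j)^2) : ℤ) : ℂ)
      + ((∑ j, 2 * (a j * b j) : ℤ):ℂ) * Real.sqrt 2 = (((2:ℤ)^k : ℤ):ℂ) := by
    push_cast
    rw [Finset.sum_mul, ← Finset.sum_add_distrib]
    rw [← hkey]
    exact Finset.sum_congr rfl fun j _ => by linear_combination -((b j:ℂ))^2 * s_mul_s
  obtain ⟨hA, hB⟩ := int_coeff_eq hC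
  -- parity consequences
  have hevenA : Even (∑ j, (a j)^2) := by
    have h1 : (∑ j, ((a j)^2 + 2*(b j)^2) : ℤ) = ∑ j, (a j)^2 + 2 * ∑ j, (b j)^2 := by
      rw [Finset.sum_add_distrib, Finset.mul_sum]
    rw [h1] at hA
    have h2 : (2:ℤ)^k = 2 * 2^q := by rw [hq, pow_succ]; ring
    exact ⟨2^q - ∑ j, (b j)^2, by linarith [hA, h2 ▸ hA]⟩
  have hevenAB : Even (∑ j, a j * b j) := by
    have h1 : (∑ j, 2 * (a j * b j) : ℤ) = 2 * ∑ j, a j * b j := by rw [Finset.mul_sum]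
    rw [h1] at hB
    exact ⟨0, by omega⟩
  -- the two classes of bad indices
  set S1 : Finset (Fin n) := Finset.univ.filter (fun j => Odd (a j) ∧ ¬ Odd (b j)) with hS1
  set S2 : Finset (Fin n) := Finset.univ.filter (fun j => Odd (a j) ∧ Odd (b j)) with hS2
  set Sodd : Finset (Fin n) := Finset.univ.filter (fun j => Odd (a j)) with hSodd
  have hevenSodd : Even Sodd.card := by
    have := (parity_count (fun j => (a j)^2) Finset.univ).mp hevenA
    have heq : Finset.univ.filter (fun j => Odd ((a j)^2)) = Sodd := by
      apply Finset.filter_congr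
      intro j _
      simp [sq, Int.odd_mul]
    rwa [heq] at this
  have hevenS2 : Even S2.card := by
    have := (parity_count (fun j => a j * b j) Finset.univ).mp hevenAB
    have heq : Finset.univ.filter (fun j => Odd (a j * b j)) = S2 := by
      apply Finset.filter_congr
      intro j _
      simp [Int.odd_mul]
    rwa [heq] at this
  have hsplit : S2.card + S1.card = Sodd.card := by
    rw [hS1, hS2, hSodd, ← Finset.filter_filter, ← Finset.filter_filter]
    exact Finset.card_filter_add_card_filter_not (fun j => Odd (b j))
  have hevenS1 : Even S1.card := by
    rcases hevenSodd with ⟨x, hx⟩; rcases hevenS2 with ⟨y, hy⟩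
    exact ⟨x - y, by omega⟩
  -- pair them up
  obtain ⟨P1, hnd1, htf1⟩ := pairing S1 hevenS1
  obtain ⟨P2, hnd2, htf2⟩ := pairing S2 hevenS2
  set P := P1 ++ P2 with hP
  have hcompsP : comps P = comps P1 ++ comps P2 := by simp [comps, hP]
  have hdisj : List.Disjoint (comps P1) (comps P2) := by
    intro x h1 h2
    have m1 : x ∈ S1 := htf1 ▸ List.mem_toFinset.mpr h1
    have m2 : x ∈ S2 := htf2 ▸ List.mem_toFinset.mpr h2
    rw [hS1, Finset.mem_filter] at m1
    rw [hS2, Finset.mem_filter] at m2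
    exact m1.2.2 m2.2.2
  have hndP : (comps P).Nodup := by
    rw [hcompsP]
    exact hnd1.append hnd2 hdisj
  -- compatibility of the pairs
  have habq : ∀ j, (Real.sqrt 2 : ℂ)^(q+1) * v j = (a j : ℂ) + (b j:ℂ) * Real.sqrt 2 := by
    intro j; rw [← hq]; exact hab j
  have hmemS1 : ∀ x, x ∈ comps P1 → x ∈ S1 := fun x hx => htf1 ▸ List.mem_toFinset.mpr hx
  have hmemS2 : ∀ x, x ∈ comps P2 → x ∈ S2 := fun x hx => htf2 ▸ List.mem_toFinset.mpr hx
  have hcomp : ∀ (Q : List (Fin n × Fin n)) (p : Fin n × Fin n), p ∈ Q →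
      p.1 ∈ comps Q ∧ p.2 ∈ comps Q := fun Q p h =>
    ⟨List.mem_flatMap.mpr ⟨p, h, by simp⟩, List.mem_flatMap.mpr ⟨p, h, by simp⟩⟩
  have hpairP : ∀ p ∈ P, Compat q (v p.1) (v p.2) := by
    intro p hp
    refine ⟨a p.1, b p.1, a p.2, b p.2, habq p.1, habq p.2, ?_, ?_⟩ <;>
    · rcases List.mem_append.mp hp with h | h
      · have h1 := hmemS1 _ (hcomp P1 p h).1
        have h2 := hmemS1 _ (hcomp P1 p h).2
        rw [hS1, Finset.mem_filter] at h1 h2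
        obtain ⟨-, ho1, hb1⟩ := h1
        obtain ⟨-, ho2, hb2⟩ := h2
        first
        | exact Odd.add_odd ho1 ho2
        | exact Even.add (Int.not_odd_iff_even.mp hb1) (Int.not_odd_iff_even.mp hb2)
      · have h1 := hmemS2 _ (hcomp P2 p h).1
        have h2 := hmemS2 _ (hcomp P2 p h).2
        rw [hS2, Finset.mem_filter] at h1 h2
        obtain ⟨-, ho1, hb1⟩ := h1
        obtain ⟨-, ho2, hb2⟩ := h2
        first
        | exact Odd.add_odd ho1 ho2
        | exact Odd.add_odd hb1 hb2
  have houtP : ∀ m, m ∉ comps P → Good q (v m) := by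
    intro m hm
    have hae : ¬ Odd (a m) := by
      intro hodd
      by_cases hbo : Odd (b m)
      · have : m ∈ S2 := by rw [hS2, Finset.mem_filter]; exact ⟨Finset.mem_univ m, hodd, hbo⟩
        rw [← htf2] at this
        exact hm (hcompsP ▸ List.mem_append.mpr (Or.inr (List.mem_toFinset.mp this)))
      · have : m ∈ S1 := by rw [hS1, Finset.mem_filter]; exact ⟨Finset.mem_univ m, hodd, hbo⟩
        rw [← htf1] at this
        exact hm (hcompsP ▸ List.mem_append.mpr (Or.inl (List.mem_toFinset.mp this)))
    obtain ⟨t, ht⟩ := Int.not_odd_iff_even.mp hae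
    refine ⟨b m, t, ?_⟩
    apply mul_left_cancel₀ s_ne
    have habm : (Real.sqrt 2:ℂ)^q * Real.sqrt 2 * v m = (a m : ℂ) + (b m : ℂ) * Real.sqrt 2 := by
      rw [← pow_succ, ← hq]; exact hab m
    have ht' : ((a m : ℤ):ℂ) = (t:ℂ) + (t:ℂ) := by exact_mod_cast congrArg (Int.cast : ℤ → ℂ) ht
    linear_combination habm + ht' - (t:ℂ) * s_mul_s
  obtain ⟨L, hgen, hgood⟩ := reduce_list q P v hndP hpairP houtP
  refine ⟨L, hgen, ?_⟩
  have hle : ldeSqrt2 (L.prod.mulVec v) ≤ q := Nat.sInf_le (fun m => hgood m)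
  omega
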